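/- Let d, m ≥ 1 be integers, let a and b be nonzero integers, let A = {a, a+b, ..., a+(m−1)b}, let A_d = {x ∈ A : d ∣ x}, and let k = gcd(d, b). If k divides a, then |A_d| = ⌊mk/d⌋ + ε_d, where ε_d = 1 if d ∤ mk and the residue of −(a/k)·(b/k)^{−1} modulo d/k (where (b/k)^{−1} is the multiplicative inverse of b/k modulo d/k) lies in the set {0, 1, ..., m − 1 − ⌊(m−1)k/d⌋·(d/k)}, and ε_d = 0 otherwise. -/

import Mathlib

/-- Counting lemma: number of `i < m` with `i % n = r` (where `r < n`). -/
lemma count_mod_eq_aux (n r : ℕ) (hn : 0 < n) (hr : r < n) (m : ℕ) :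
    ((Finset.range m).filter (fun i => i % n = r)).card =
      m / n + if r < m % n then 1 else 0 := by
  induction m with
  | zero => simp
  | succ m ih =>
    rw [Finset.range_add_one, Finset.filter_insert]
    have h1 : m % n < n := Nat.mod_lt _ hn
    have hdm : n * (m / n) + m % n = m := Nat.div_add_mod m n
    by_cases hlt : m % n + 1 < n
    · have e1 : (m + 1) % n = m % n + 1 := by
        conv_lhs => rw [← hdm]
        rw [add_assoc, Nat.mul_add_mod, Nat.mod_eq_of_lt hlt]
      have e2 : (m + 1) / n = m / n := by
        conv_lhs => rw [← hdm]
        rw [add_assoc, Nat.mul_add_div hn, Nat.div_eq_of_lt hlt, add_zero]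
      by_cases hc : m % n = r
      · rw [if_pos hc, Finset.card_insert_of_notMem (by simp), ih, e1, e2]
        split_ifs <;> omega
      · rw [if_neg hc, ih, e1, e2]
        split_ifs <;> omega
    · have heq : m % n + 1 = n := by omega
      have e0 : m + 1 = n * (m / n + 1) := by rw [Nat.mul_succ]; omega
      have e1 : (m + 1) % n = 0 := by rw [e0, Nat.mul_mod_right]
      have e2 : (m + 1) / n = m / n + 1 := by
        rw [e0, Nat.mul_div_cancel_left _ hn]
      by_cases hc : m % n = r
      · rw [if_pos hc, Finset.card_insert_of_notMem (by simp), ih, e1, e2]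
        split_ifs <;> omega
      · rw [if_neg hc, ih, e1, e2]
        split_ifs <;> omega

theorem card_filter_dvd_arith_prog_of_gcd_dvd
    (d m : ℕ) (hd : 1 ≤ d) (hm : 1 ≤ m) (a b : ℤ) (ha : a ≠ 0) (hb : b ≠ 0)
    (h : ((Int.gcd (d : ℤ) b : ℤ) ∣ a)) :
    (((Finset.range m).image (fun i : ℕ => a + (i : ℤ) * b)).filter
      (fun x => (d : ℤ) ∣ x)).card =
    m * Int.gcd (d : ℤ) b / d +
      (if ¬ (d ∣ m * Int.gcd (d : ℤ) b) ∧
          (((-(a / (Int.gcd (d : ℤ) b : ℤ)) : ℤ) : ZMod (d / Int.gcd (d : ℤ) b)) *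
            (((b / (Int.gcd (d : ℤ) b : ℤ)) : ℤ) : ZMod (d / Int.gcd (d : ℤ) b))⁻¹).val ≤
            m - 1 - (m - 1) * Int.gcd (d : ℤ) b / d * (d / Int.gcd (d : ℤ) b)
        then 1 else 0) := by
  set k : ℕ := Int.gcd (d : ℤ) b with hk
  have hk0 : 0 < k := Int.gcd_pos_of_ne_zero_right _ hb
  have hkZ : (k : ℤ) ≠ 0 := by exact_mod_cast hk0.ne'
  have hkd : k ∣ d := by
    have h2 : ((k : ℕ) : ℤ) ∣ (d : ℤ) := Int.gcd_dvd_left _ _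
    exact_mod_cast h2
  have hkb : (k : ℤ) ∣ b := Int.gcd_dvd_right _ _
  set n : ℕ := d / k with hn
  have hdn : d = k * n := (Nat.mul_div_cancel' hkd).symm
  have hn0 : 0 < n := Nat.div_pos (Nat.le_of_dvd (by omega) hkd) hk0
  haveI : NeZero n := ⟨hn0.ne'⟩
  set a' : ℤ := a / (k : ℤ) with ha'
  set b' : ℤ := b / (k : ℤ) with hb'
  have haa : a = (k : ℤ) * a' := (Int.mul_ediv_cancel' h).symm
  have hbb : b = (k : ℤ) * b' := (Int.mul_ediv_cancel' hkb).symm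
  have hdnZ : ((d : ℤ) / (k : ℤ)) = (n : ℤ) := by
    rw [hdn]; push_cast; rw [Int.mul_ediv_cancel_left _ hkZ]
  -- coprimality of n and b'
  have hcop : Int.gcd (n : ℤ) b' = 1 := by
    have := Int.gcd_div_gcd_div_gcd (i := (d : ℤ)) (j := b) hk0
    rwa [← hk, hdnZ, ← hb'] at this
  -- b' is a unit mod n
  have hunit : IsUnit ((b' : ℤ) : ZMod n) := by
    have hco : IsCoprime (b' : ℤ) (n : ℤ) := by
      rw [Int.isCoprime_iff_gcd_eq_one, Int.gcd_comm]; exact hcop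
    obtain ⟨u, v, huv⟩ := hco
    refine IsUnit.of_mul_eq_one ((u : ℤ) : ZMod n) ?_
    have : ((u * b' + v * n : ℤ) : ZMod n) = ((1 : ℤ) : ZMod n) := by rw [huv]
    push_cast at this
    rw [ZMod.natCast_self] at this
    rw [mul_comm]
    simpa using this
  set x : ZMod n := ((-a' : ℤ) : ZMod n) * (((b' : ℤ) : ZMod n))⁻¹ with hx
  set r : ℕ := x.val with hr
  have hrn : r < n := ZMod.val_lt x
  -- key divisibility characterization
  have key : ∀ i : ℕ, ((d : ℤ) ∣ a + (i : ℤ) * b) ↔ i % n = r := by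
    intro i
    have e : a + (i : ℤ) * b = (k : ℤ) * (a' + (i : ℤ) * b') := by
      rw [haa, hbb]; ring
    have ed : (d : ℤ) = (k : ℤ) * (n : ℤ) := by rw [hdn]; push_cast; ring
    rw [e, ed, mul_dvd_mul_iff_left hkZ, ← ZMod.intCast_zmod_eq_zero_iff_dvd]
    push_cast
    have step : ((a' : ℤ) : ZMod n) + (i : ZMod n) * ((b' : ℤ) : ZMod n) = 0 ↔
        (i : ZMod n) = x := by
      constructor
      · intro hh
        have h2 : (i : ZMod n) * ((b' : ℤ) : ZMod n) = ((-a' : ℤ) : ZMod n) := by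
          push_cast; linear_combination hh
        calc (i : ZMod n) = (i : ZMod n) * (((b' : ℤ) : ZMod n) * (((b' : ℤ) : ZMod n))⁻¹) := by
              rw [ZMod.mul_inv_of_unit _ hunit, mul_one]
          _ = ((-a' : ℤ) : ZMod n) * (((b' : ℤ) : ZMod n))⁻¹ := by rw [← mul_assoc, h2]
          _ = x := rfl
      · intro hh
        rw [hh, hx]
        push_cast
        have : (((b' : ℤ) : ZMod n))⁻¹ * ((b' : ℤ) : ZMod n) = 1 := by
          rw [mul_comm]; exact ZMod.mul_inv_of_unit _ hunit
        push_cast at this ⊢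
        calc ((a' : ℤ) : ZMod n) + -((a' : ℤ) : ZMod n) * (((b' : ℤ) : ZMod n))⁻¹ *
              ((b' : ℤ) : ZMod n) = ((a' : ℤ) : ZMod n) + -((a' : ℤ) : ZMod n) *
              ((((b' : ℤ) : ZMod n))⁻¹ * ((b' : ℤ) : ZMod n)) := by ring
          _ = 0 := by rw [this]; ring
    rw [step]
    constructor
    · intro hh
      rw [hr, ← hh, ZMod.val_natCast]
    · intro hh
      have h2 : ((i : ZMod n)).val = x.val := by rw [ZMod.val_natCast, hh]
      exact ZMod.val_injective _ h2
  -- reduce to counting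
  have hinj : Function.Injective (fun i : ℕ => a + (i : ℤ) * b) := by
    intro i j hij
    simp only at hij
    have : (i : ℤ) * b = (j : ℤ) * b := by linarith
    have := mul_right_cancel₀ hb this
    exact_mod_cast this
  rw [Finset.filter_image, Finset.card_image_of_injective _ hinj]
  have hcount : ((Finset.range m).filter
      (fun i : ℕ => (d : ℤ) ∣ a + (i : ℤ) * b)).card =
      m / n + if r < m % n then 1 else 0 := by
    have heq2 : (Finset.range m).filter (fun i : ℕ => (d : ℤ) ∣ a + (i : ℤ) * b) =
        (Finset.range m).filter (fun i : ℕ => i % n = r) :=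
      Finset.filter_congr (fun i _ => by simp [key i])
    rw [heq2]
    exact count_mod_eq_aux n r hn0 hrn m
  rw [hcount]
  -- now pure arithmetic
  have e1 : m * k / d = m / n := by
    rw [hdn, mul_comm k n, Nat.mul_div_mul_right _ _ hk0]
  have e2 : (m - 1) * k / d = (m - 1) / n := by
    rw [hdn, mul_comm k n, Nat.mul_div_mul_right _ _ hk0]
  have e3 : (d ∣ m * k) ↔ (n ∣ m) := by
    rw [hdn, mul_comm k n, Nat.mul_dvd_mul_iff_right hk0]
  have e4 : m - 1 - (m - 1) / n * n = (m - 1) % n := by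
    have := Nat.div_add_mod' (m - 1) n
    omega
  rw [e1, e2]
  simp only [e3, e4]
  congr 1
  -- relate m % n with (m-1) % n
  have hdm1 : n * ((m - 1) / n) + (m - 1) % n = m - 1 := Nat.div_add_mod (m - 1) n
  have h1 : (m - 1) % n < n := Nat.mod_lt _ hn0
  have hdvd : (n ∣ m) ↔ m % n = 0 := Nat.dvd_iff_mod_eq_zero
  have hmrel : m % n = ((m - 1) % n + 1) % n := by
    conv_lhs => rw [show m = (m - 1) + 1 by omega, ← hdm1]
    rw [add_assoc, Nat.mul_add_mod]
  by_cases hcase : (m - 1) % n + 1 < n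
  · have : m % n = (m - 1) % n + 1 := by rw [hmrel, Nat.mod_eq_of_lt hcase]
    simp only [hdvd]
    split_ifs <;> omega
  · have hne : (m - 1) % n + 1 = n := by omega
    have : m % n = 0 := by rw [hmrel, hne, Nat.mod_self]
    simp only [hdvd]
    split_ifs <;> omega
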